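/- With Δ(x,t) = sqrt((1 − (1 + x + x^{-1})t)² − 4t) the formal power series in t with Δ(x,0) = 1, the constant term in x of ((1−x)/(1+x))·Δ(x,t) equals 1 − t. -/

import Mathlib

open PowerSeries

/-- The Laurent series `x` in `ℚ((x))`. -/
noncomputable def xL : LaurentSeries ℚ := HahnSeries.single 1 1

/-- `Δ(x,t)` is the unique power series in `t` with coefficients in `ℚ((x))` such
that `Δ(x,0) = 1` and `Δ² = (1 − (1 + x + x⁻¹)t)² − 4t`. -/
def IsDelta (Δ : PowerSeries (LaurentSeries ℚ)) : Prop :=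
  constantCoeff (R := LaurentSeries ℚ) Δ = 1 ∧
  Δ ^ 2 = (1 - C (R := LaurentSeries ℚ) (1 + xL + xL⁻¹) * X) ^ 2 - 4 * X

namespace Stmt10Aux

open LaurentPolynomial

/-- `a = 1 + x + x⁻¹` as a Laurent polynomial. -/
noncomputable def a : LaurentPolynomial ℚ := 1 + T 1 + T (-1)

/-- coefficients of `(1 - a t)² - 4t`. -/
noncomputable def f : ℕ → LaurentPolynomial ℚ
  | 0 => 1
  | 1 => -(2 * a + 4)
  | 2 => a ^ 2
  | _ => 0

lemma hF : (1 - PowerSeries.C a * X) ^ 2 - 4 * X = PowerSeries.mk f := by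
  have h : (1 - PowerSeries.C a * X) ^ 2 - 4 * X
      = PowerSeries.C 1 * X ^ 0 + PowerSeries.C (-(2 * a + 4)) * X ^ 1
        + PowerSeries.C (a ^ 2) * X ^ 2 := by
    simp only [map_add, map_neg, map_mul, map_pow, map_one, map_ofNat, pow_zero, pow_one]
    ring
  refine PowerSeries.ext fun n => ?_
  rw [h, coeff_mk, map_add, map_add, PowerSeries.coeff_C_mul_X_pow,
    PowerSeries.coeff_C_mul_X_pow, PowerSeries.coeff_C_mul_X_pow]
  rcases n with _ | _ | _ | n <;> simp [f]

/-- coefficients of the square root series. -/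
noncomputable def d : ℕ → LaurentPolynomial ℚ
  | 0 => 1
  | (n+1) => LaurentPolynomial.C (1/2 : ℚ) *
      (f (n+1) - ∑ i ∈ (Finset.range n).attach, d (i.1+1) * d (n-i.1))
  termination_by n => n
  decreasing_by
    · have := i.2; simp only [Finset.mem_range] at this; omega
    · have := i.2; simp only [Finset.mem_range] at this; omega

lemma d_zero : d 0 = 1 := by rw [d]

lemma d_succ (n : ℕ) : d (n+1) = LaurentPolynomial.C (1/2 : ℚ) *
    (f (n+1) - ∑ i ∈ Finset.range n, d (i+1) * d (n-i)) := by
  rw [d, ← Finset.sum_attach (Finset.range n) (fun i => d (i+1) * d (n-i))]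

lemma d_sq : PowerSeries.mk d * PowerSeries.mk d = PowerSeries.mk f := by
  refine PowerSeries.ext fun m => ?_
  rw [PowerSeries.coeff_mul, Finset.Nat.sum_antidiagonal_eq_sum_range_succ_mk]
  simp only [coeff_mk]
  cases m with
  | zero => simp [d_zero, f]
  | succ n =>
    rw [Finset.sum_range_succ, Finset.sum_range_succ']
    have h2 : (LaurentPolynomial.C (1/2 : ℚ)) + LaurentPolynomial.C (1/2 : ℚ)
        = (1 : LaurentPolynomial ℚ) := by rw [← map_add]; norm_num
    have hd := d_succ n
    simp only [Nat.succ_sub_succ_eq_sub, Nat.sub_zero, Nat.sub_self, d_zero, one_mul, mul_one]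
    linear_combination (f (n+1) - ∑ i ∈ Finset.range n, d (i+1) * d (n-i)) * h2 +
      (2 : LaurentPolynomial ℚ) * hd

/-- `x ↦ x` into Laurent series. -/
noncomputable def ψ : LaurentPolynomial ℚ →ₐ[ℚ] LaurentSeries ℚ :=
  AddMonoidAlgebra.lift ℚ _ ℤ
    { toFun := fun n => HahnSeries.single (Multiplicative.toAdd n) (1 : ℚ)
      map_one' := rfl
      map_mul' := fun m n => by
        rw [HahnSeries.single_mul_single, one_mul]; rfl }

/-- evaluation at `x = -1`. -/
noncomputable def e : LaurentPolynomial ℚ →ₐ[ℚ] ℚ :=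
  AddMonoidAlgebra.lift ℚ _ ℤ
    { toFun := fun n => (-1 : ℚ) ^ (Multiplicative.toAdd n)
      map_one' := rfl
      map_mul' := fun m n => zpow_add₀ (by norm_num) _ _ }

/-- the involution `x ↦ x⁻¹`. -/
noncomputable def ι : LaurentPolynomial ℚ →ₐ[ℚ] LaurentPolynomial ℚ :=
  AddMonoidAlgebra.lift ℚ _ ℤ
    { toFun := fun n => T (-(Multiplicative.toAdd n))
      map_one' := by show (T (-(0:ℤ)) : LaurentPolynomial ℚ) = 1; rw [neg_zero]; exact T_zero
      map_mul' := fun m n => by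
        show (T (-(Multiplicative.toAdd m + Multiplicative.toAdd n)) : LaurentPolynomial ℚ) = _
        rw [neg_add, T_add] }

@[simp] lemma ψ_T (k : ℤ) : ψ (T k) = HahnSeries.single k (1 : ℚ) := by
  have h : (T k : LaurentPolynomial ℚ) = AddMonoidAlgebra.single k (1 : ℚ) := rfl
  rw [h]
  simp only [ψ, AddMonoidAlgebra.lift_single, MonoidHom.coe_mk, OneHom.coe_mk, toAdd_ofAdd]
  rw [Algebra.smul_def, map_one, one_mul]

@[simp] lemma e_T (k : ℤ) : e (T k) = (-1 : ℚ) ^ k := by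
  have h : (T k : LaurentPolynomial ℚ) = AddMonoidAlgebra.single k (1 : ℚ) := rfl
  rw [h]
  simp only [e, AddMonoidAlgebra.lift_single, MonoidHom.coe_mk, OneHom.coe_mk, toAdd_ofAdd]
  exact one_smul ℚ _

@[simp] lemma ι_T (k : ℤ) : ι (T k) = T (-k) := by
  have h : (T k : LaurentPolynomial ℚ) = AddMonoidAlgebra.single k (1 : ℚ) := rfl
  rw [h]
  simp only [ι, AddMonoidAlgebra.lift_single, MonoidHom.coe_mk, OneHom.coe_mk, toAdd_ofAdd]
  exact one_smul ℚ _

@[simp] lemma ψ_C (c : ℚ) : ψ (LaurentPolynomial.C c) = HahnSeries.C c := by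
  rw [LaurentPolynomial.C_eq_algebraMap, AlgHom.commutes]
  rw [HahnSeries.algebraMap_apply', show (algebraMap ℚ ℚ⟦X⟧) c = PowerSeries.C c from rfl]
  exact HahnSeries.ofPowerSeries_C c

@[simp] lemma e_C (c : ℚ) : e (LaurentPolynomial.C c) = c := by
  rw [LaurentPolynomial.C_eq_algebraMap, AlgHom.commutes]
  rfl

@[simp] lemma ι_C (c : ℚ) : ι (LaurentPolynomial.C c) = LaurentPolynomial.C c := by
  rw [LaurentPolynomial.C_eq_algebraMap, AlgHom.commutes]

lemma ι_a : ι a = a := by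
  show ι (1 + T 1 + T (-1)) = 1 + T 1 + T (-1)
  rw [map_add, map_add, map_one, ι_T, ι_T]
  ring

lemma ι_f (m : ℕ) : ι (f m) = f m := by
  rcases m with _ | _ | _ | m <;>
    simp [f, map_add, map_neg, map_mul, map_pow, map_ofNat, ι_a]

lemma ι_d (n : ℕ) : ι (d n) = d n := by
  induction n using Nat.strong_induction_on with
  | _ n ih =>
    cases n with
    | zero => simp [d_zero]
    | succ m =>
      have hs : ι (∑ i ∈ Finset.range m, d (i+1) * d (m-i))
          = ∑ i ∈ Finset.range m, d (i+1) * d (m-i) := by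
        rw [map_sum]
        refine Finset.sum_congr rfl fun i hi => ?_
        simp only [Finset.mem_range] at hi
        rw [map_mul, ih _ (by omega), ih _ (by omega)]
      rw [d_succ, map_mul, map_sub, ι_C, ι_f, hs, ← d_succ]

noncomputable def D : PowerSeries (LaurentPolynomial ℚ) := PowerSeries.mk d

lemma sq_unique {A : Type*} [CommRing A] [IsDomain A] {P Q : A}
    (h : P ^ 2 = Q ^ 2) (h2 : P + Q ≠ 0) : P = Q := by
  have h0 : (P - Q) * (P + Q) = 0 := by linear_combination h
  rcases mul_eq_zero.1 h0 with h' | h'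
  · exact sub_eq_zero.1 h'
  · exact absurd h' h2

lemma constantCoeff_map' {R S : Type*} [Semiring R] [Semiring S] (g : R →+* S)
    (φ : PowerSeries R) :
    constantCoeff (PowerSeries.map g φ) = g (constantCoeff φ) := by
  rw [← PowerSeries.coeff_zero_eq_constantCoeff, PowerSeries.coeff_map,
    PowerSeries.coeff_zero_eq_constantCoeff]

lemma e_a : e a = -1 := by
  show e (1 + T 1 + T (-1)) = -1
  rw [map_add, map_add, map_one, e_T, e_T]
  norm_num

lemma D_sq : D ^ 2 = (1 - PowerSeries.C a * X) ^ 2 - 4 * X := by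
  rw [pow_two]; exact d_sq.trans hF.symm

lemma mapE : PowerSeries.map e.toRingHom D = 1 - X := by
  apply sq_unique
  · rw [← map_pow, D_sq, map_sub, map_pow, map_sub, map_one, map_mul, map_mul,
      PowerSeries.map_C, PowerSeries.map_X, map_ofNat]
    rw [show e.toRingHom a = -1 from e_a]
    simp only [map_neg, map_one]
    ring
  · intro hcon
    have := congrArg constantCoeff hcon
    simp only [map_add, constantCoeff_map', D, constantCoeff_mk, d_zero, map_one,
      map_sub, PowerSeries.constantCoeff_X, map_zero] at this
    norm_num at this

lemma e_d (n : ℕ) : e (d n) = PowerSeries.coeff n (1 - X) := by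
  have h := congrArg (PowerSeries.coeff n) mapE
  rwa [PowerSeries.coeff_map, show PowerSeries.coeff n D = d n from coeff_mk n d] at h

lemma xL_inv : xL⁻¹ = HahnSeries.single (-1 : ℤ) (1 : ℚ) := by
  apply inv_eq_of_mul_eq_one_right
  rw [xL, HahnSeries.single_mul_single, add_neg_cancel, mul_one, HahnSeries.single_zero_one]

lemma ψ_a : ψ a = 1 + xL + xL⁻¹ := by
  show ψ (1 + T 1 + T (-1)) = 1 + xL + xL⁻¹
  rw [map_add, map_add, map_one, ψ_T, ψ_T, xL_inv, xL]

lemma mapΨ (Δ : PowerSeries (LaurentSeries ℚ)) (hΔ : IsDelta Δ) :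
    Δ = PowerSeries.map ψ.toRingHom D := by
  obtain ⟨h1, h2⟩ := hΔ
  apply sq_unique
  · rw [h2, ← map_pow, D_sq, map_sub, map_pow, map_sub, map_one, map_mul, map_mul,
      PowerSeries.map_C, PowerSeries.map_X, map_ofNat]
    rw [show ψ.toRingHom a = 1 + xL + xL⁻¹ from ψ_a]
  · intro hcon
    have := congrArg constantCoeff hcon
    simp only [map_add, constantCoeff_map', D, constantCoeff_mk, d_zero, map_one,
      h1, map_zero] at this
    have h3 := congrArg (fun z : LaurentSeries ℚ => z.coeff 0) this
    simp only [HahnSeries.coeff_add, HahnSeries.coeff_one, HahnSeries.coeff_zero] at h3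
    norm_num at h3

lemma coeffΔ (Δ : PowerSeries (LaurentSeries ℚ)) (hΔ : IsDelta Δ) (n : ℕ) :
    PowerSeries.coeff n Δ = ψ (d n) := by
  rw [mapΨ Δ hΔ, PowerSeries.coeff_map, show PowerSeries.coeff n D = d n from coeff_mk n d]
  rfl

/-- the expansion of `(1-x)/(1+x)`. -/
noncomputable def G : PowerSeries ℚ :=
  PowerSeries.mk fun n => if n = 0 then 1 else 2 * (-1 : ℚ) ^ n

lemma hG : (1 + X) * G = 1 - X := by
  refine PowerSeries.ext fun n => ?_
  rw [add_mul, one_mul, map_add]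
  cases n with
  | zero => simp [G]
  | succ m =>
    rw [PowerSeries.coeff_succ_X_mul]
    rcases m with _ | m <;>
      simp [G, coeff_mk, PowerSeries.coeff_one, PowerSeries.coeff_X, pow_succ] <;> ring

lemma one_add_xL_ne : (1 + xL : LaurentSeries ℚ) ≠ 0 := by
  intro hcon
  have := congrArg (fun (z : LaurentSeries ℚ) => z.coeff 0) hcon
  simp only [HahnSeries.coeff_add, HahnSeries.coeff_one, xL, HahnSeries.coeff_zero] at this
  rw [HahnSeries.coeff_single_of_ne (by norm_num)] at this
  norm_num at this

lemma hg : ((1 - xL) / (1 + xL) : LaurentSeries ℚ)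
    = ((G : ℚ⟦X⟧) : LaurentSeries ℚ) := by
  rw [div_eq_iff one_add_xL_ne]
  have h1 : ((1 + xL : LaurentSeries ℚ)) = (((1 + X : ℚ⟦X⟧) : ℚ⟦X⟧) : LaurentSeries ℚ) := by
    rw [PowerSeries.coe_add, PowerSeries.coe_one, PowerSeries.coe_X, xL]
  have h2 : ((1 - xL : LaurentSeries ℚ)) = (((1 - X : ℚ⟦X⟧) : ℚ⟦X⟧) : LaurentSeries ℚ) := by
    rw [PowerSeries.coe_sub, PowerSeries.coe_one, PowerSeries.coe_X, xL]
  rw [h1, h2, ← PowerSeries.coe_mul, mul_comm, hG]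

lemma g_coeff_nat (m : ℕ) :
    ((G : ℚ⟦X⟧) : LaurentSeries ℚ).coeff (m : ℤ) = if m = 0 then 1 else 2 * (-1 : ℚ) ^ m := by
  rw [LaurentSeries.coeff_coe_powerSeries, G, coeff_mk]

lemma g_coeff_neg (m : ℕ) :
    ((G : ℚ⟦X⟧) : LaurentSeries ℚ).coeff (Int.negSucc m) = 0 := by
  rw [HahnSeries.ofPowerSeries_apply, HahnSeries.embDomain_notin_range]
  rintro ⟨k, hk⟩
  simp only [Nat.castOrderEmbedding_apply] at hk
  rw [Int.negSucc_eq] at hk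
  omega

lemma hneg (j : ℤ) : (-1 : ℚ) ^ (-j) = (-1 : ℚ) ^ j := by
  rw [zpow_neg, ← inv_zpow, inv_neg, inv_one]

lemma key (k : ℤ) : ((G : ℚ⟦X⟧) : LaurentSeries ℚ).coeff (-k)
    + ((G : ℚ⟦X⟧) : LaurentSeries ℚ).coeff k = 2 * (-1 : ℚ) ^ k := by
  have h0 := g_coeff_nat 0
  rw [Nat.cast_zero] at h0
  rcases k with m | m
  · rcases m with _ | m
    · rw [show -(Int.ofNat 0) = (0:ℤ) from rfl, show (Int.ofNat 0) = (0:ℤ) from rfl, h0]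
      norm_num
    · rw [show Int.ofNat (m+1) = ((m+1 : ℕ) : ℤ) from rfl,
        show -((m+1 : ℕ) : ℤ) = Int.negSucc m by rw [Int.negSucc_eq]; push_cast; ring,
        g_coeff_neg, g_coeff_nat, if_neg (Nat.succ_ne_zero m), zpow_natCast]
      push_cast
      ring
  · rw [show -(Int.negSucc m) = ((m+1 : ℕ) : ℤ) by rw [Int.negSucc_eq]; push_cast; ring,
      g_coeff_neg, g_coeff_nat, if_neg (Nat.succ_ne_zero m),
      show (Int.negSucc m) = -((m+1 : ℕ) : ℤ) by rw [Int.negSucc_eq]; push_cast; ring,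
      hneg, zpow_natCast]
    push_cast
    ring

lemma claim (p : LaurentPolynomial ℚ) :
    (((G : ℚ⟦X⟧) : LaurentSeries ℚ) * ψ p).coeff 0
      + (((G : ℚ⟦X⟧) : LaurentSeries ℚ) * ψ (ι p)).coeff 0 = e p + e (ι p) := by
  induction p using LaurentPolynomial.induction_on' with
  | add p q hp hq =>
    simp only [map_add, mul_add, HahnSeries.coeff_add] at *
    linarith
  | C_mul_T k c =>
    have hψ : ∀ j : ℤ, ψ (LaurentPolynomial.C c * T j) = HahnSeries.single j c := by
      intro j
      rw [map_mul, ψ_C, ψ_T, HahnSeries.C_apply, HahnSeries.single_mul_single, zero_add, mul_one]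
    have hco : ∀ j : ℤ, (((G : ℚ⟦X⟧) : LaurentSeries ℚ) * HahnSeries.single j c).coeff 0
        = ((G : ℚ⟦X⟧) : LaurentSeries ℚ).coeff (-j) * c := by
      intro j
      rw [show (0 : ℤ) = -j + j by ring, HahnSeries.coeff_mul_single_add]
    have hι : ι (LaurentPolynomial.C c * T k) = LaurentPolynomial.C c * T (-k) := by
      rw [map_mul, ι_C, ι_T]
    have he : ∀ j : ℤ, e (LaurentPolynomial.C c * T j) = c * (-1 : ℚ) ^ j := by
      intro j
      rw [map_mul, e_C, e_T]
    rw [hι, hψ, hψ, hco, hco, he, he, neg_neg, hneg]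
    linear_combination c * key k

end Stmt10Aux

/-- `CT_x ((1−x)/(1+x) · Δ) = 1 − t`, coefficientwise in `t`. -/
theorem stmt10 (Δ : PowerSeries (LaurentSeries ℚ)) (hΔ : IsDelta Δ) (n : ℕ) :
    ((coeff (R := LaurentSeries ℚ) n) (C (R := LaurentSeries ℚ) ((1 - xL) / (1 + xL)) * Δ)).coeff 0
      = (coeff (R := ℚ) n) (1 - X) := by
  rw [PowerSeries.coeff_C_mul, Stmt10Aux.coeffΔ Δ hΔ n, Stmt10Aux.hg]
  have h := Stmt10Aux.claim (Stmt10Aux.d n)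
  rw [Stmt10Aux.ι_d] at h
  have h2 := Stmt10Aux.e_d n
  linarith
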